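/- Let G(x,t) = (4πt)^{−1/2} exp(−x²/(4t)) be the heat kernel and for x, y ≥ 0, t < T define K_T(x,y,t) = G(x−y, (1+y)^{1/3}(T−t)) − G(x+y, (1+y)^{1/3}(T−t)). Then there exist universal constants η₁, η₂ > 0 such that: (i) K_T(x,y,t) ≥ η₁ G(x−y, (1+y)^{1/3}(T−t)) whenever |x−y| ≤ x/2, x ≥ √(T−t), and T−t ≤ 1; (ii) ∫_{|x−y|<x/2} G(x−y, (1+y)^{1/3}(T−t)) dy ≥ η₂ for x ≥ √(T−t), T−t ≤ 1. Consequently v(x,t) = ∫₀^∞ K_T(x,y,t) dy ≥ η₁η₂ for x ≥ √(T−t), T−t ≤ 1. -/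

import Mathlib

open MeasureTheory Set

noncomputable def heatG (x t : ℝ) : ℝ :=
  (Real.sqrt (4 * Real.pi * t))⁻¹ * Real.exp (-(x^2) / (4*t))

noncomputable def imgK (T x y t : ℝ) : ℝ :=
  heatG (x - y) ((1+y) ^ ((1:ℝ)/3) * (T - t))
    - heatG (x + y) ((1+y) ^ ((1:ℝ)/3) * (T - t))

lemma heatG_pos {x t : ℝ} (ht : 0 < t) : 0 < heatG x t := by
  unfold heatG
  have hpi := Real.pi_pos
  exact mul_pos (inv_pos.mpr (Real.sqrt_pos.mpr (by positivity))) (Real.exp_pos _)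

lemma heatG_mono_x {x x' t : ℝ} (ht : 0 < t) (h : x^2 ≤ x'^2) :
    heatG x' t ≤ heatG x t := by
  unfold heatG
  have hpi := Real.pi_pos
  have h4t : (0:ℝ) < 4*t := by linarith
  apply mul_le_mul_of_nonneg_left _ (by positivity)
  exact Real.exp_le_exp.mpr ((div_le_div_iff_of_pos_right h4t).mpr (by linarith))

lemma eight_rpow : ((8:ℝ)) ^ ((1:ℝ)/3) = 2 := by
  rw [show (8:ℝ) = 2 ^ (3:ℝ) by
    rw [show (3:ℝ) = ((3:ℕ):ℝ) by norm_num, Real.rpow_natCast]; norm_num]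
  rw [← Real.rpow_mul (by norm_num)]
  norm_num

-- part (i) core
lemma key1 {x y s : ℝ} (hs : 0 < s) (h : s ≤ 4*x*y) :
    heatG (x+y) s ≤ (4/5) * heatG (x-y) s := by
  have hprod : heatG (x+y) s = heatG (x-y) s * Real.exp (-(x*y)/s) := by
    have key : Real.exp (-((x + y) ^ 2) / (4 * s)) =
        Real.exp (-((x - y) ^ 2) / (4 * s)) * Real.exp (-(x * y) / s) := by
      rw [← Real.exp_add]; congr 1; field_simp; ring
    unfold heatG
    rw [key]; ring
  rw [hprod]
  have h1 : Real.exp (-(x*y)/s) ≤ 4/5 := by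
    have hq : (1:ℝ)/4 ≤ (x*y)/s := by rw [le_div_iff₀ hs]; linarith
    have h2 : Real.exp (-(x*y)/s) ≤ Real.exp (-(1/4:ℝ)) := by
      apply Real.exp_le_exp.mpr
      rw [neg_div]
      linarith
    have h3 : Real.exp (-(1/4:ℝ)) ≤ 4/5 := by
      rw [Real.exp_neg]
      rw [inv_le_comm₀ (Real.exp_pos _) (by norm_num)]
      calc (4/5:ℝ)⁻¹ = 5/4 := by norm_num
        _ ≤ Real.exp (1/4) := by
            have := Real.add_one_le_exp (1/4:ℝ); linarith
    linarith
  calc heatG (x-y) s * Real.exp (-(x*y)/s) ≤ heatG (x-y) s * (4/5) :=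
        mul_le_mul_of_nonneg_left h1 (heatG_pos hs).le
    _ = 4/5 * heatG (x-y) s := by ring

-- pointwise lower bound for part (ii)
lemma heatG_lb {z s s₀ b : ℝ} (hs0 : 0 < s₀) (h1 : s₀/2 ≤ s) (h2 : s ≤ 2*s₀)
    (hz : z^2 ≤ b) :
    (Real.sqrt (8 * Real.pi * s₀))⁻¹ * Real.exp (-b/(2*s₀)) ≤ heatG z s := by
  have hpi := Real.pi_pos
  have hs : 0 < s := by linarith
  unfold heatG
  apply mul_le_mul
  · apply inv_anti₀ (Real.sqrt_pos.mpr (by positivity))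
    apply Real.sqrt_le_sqrt
    nlinarith
  · apply Real.exp_le_exp.mpr
    rw [div_le_div_iff₀ (by positivity) (by positivity)]
    nlinarith
  · exact (Real.exp_pos _).le
  · positivity

-- continuity
lemma heatG_contOn {f g : ℝ → ℝ} {S : Set ℝ} (hf : ContinuousOn f S)
    (hg : ContinuousOn g S) (hpos : ∀ y ∈ S, 0 < g y) :
    ContinuousOn (fun y => heatG (f y) (g y)) S := by
  have hpi := Real.pi_pos
  apply ContinuousOn.mul
  · apply ContinuousOn.inv₀
    · exact ((continuousOn_const.mul hg).sqrt)
    · intro y hy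
      exact ne_of_gt (Real.sqrt_pos.mpr (by have := hpos y hy; positivity))
  · apply Real.continuous_exp.comp_continuousOn
    apply ContinuousOn.div
    · exact ((hf.pow 2).neg)
    · exact continuousOn_const.mul hg
    · intro y hy
      have := hpos y hy; positivity

lemma rpow_cont : Continuous (fun y : ℝ => (1+y) ^ ((1:ℝ)/3)) := by
  apply Continuous.rpow_const (continuous_const.add continuous_id)
  intro y; right; norm_num

lemma imgK_contOn {T t x : ℝ} (h : 0 < T - t) {S : Set ℝ} (hS : ∀ y ∈ S, 0 ≤ y) :
    ContinuousOn (fun y => imgK T x y t) S := by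
  have hg : ContinuousOn (fun y : ℝ => (1+y) ^ ((1:ℝ)/3) * (T-t)) S :=
    (rpow_cont.mul continuous_const).continuousOn
  have hpos : ∀ y ∈ S, 0 < (1+y) ^ ((1:ℝ)/3) * (T-t) := fun y hy =>
    mul_pos (Real.rpow_pos_of_pos (by have := hS y hy; linarith) _) h
  unfold imgK
  exact (heatG_contOn (continuous_const.sub continuous_id).continuousOn hg hpos).sub
    (heatG_contOn (continuous_const.add continuous_id).continuousOn hg hpos)

set_option maxHeartbeats 1000000 in
theorem stmt_17 :
    ∃ η₁ > (0:ℝ), ∃ η₂ > (0:ℝ),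
      ∀ T t x : ℝ, 0 < T - t → T - t ≤ 1 → Real.sqrt (T - t) ≤ x →
        (∀ y : ℝ, 0 ≤ y → |x - y| ≤ x/2 →
          η₁ * heatG (x - y) ((1+y) ^ ((1:ℝ)/3) * (T - t)) ≤ imgK T x y t) ∧
        η₂ ≤ (∫ y in Ioo (x/2) (3*x/2), heatG (x - y) ((1+y) ^ ((1:ℝ)/3) * (T - t))) ∧
        η₁ * η₂ ≤ ∫ y in Ioi (0:ℝ), imgK T x y t := by
  refine ⟨1/5, by norm_num, 1/10, by norm_num, ?_⟩
  intro T t x h1 h2 h3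
  have hpi := Real.pi_pos
  have hx : 0 < x := lt_of_lt_of_le (Real.sqrt_pos.mpr h1) h3
  have hx2 : T - t ≤ x^2 := by
    nlinarith [Real.sq_sqrt h1.le, Real.sqrt_nonneg (T - t)]
  have hsy_pos : ∀ y : ℝ, 0 ≤ y → 0 < (1+y) ^ ((1:ℝ)/3) * (T-t) := fun y hy =>
    mul_pos (Real.rpow_pos_of_pos (by linarith) _) h1
  -- Part (i)
  have part1 : ∀ y : ℝ, 0 ≤ y → |x - y| ≤ x/2 →
      (1/5 : ℝ) * heatG (x - y) ((1+y) ^ ((1:ℝ)/3) * (T-t)) ≤ imgK T x y t := by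
    intro y hy hxy
    have hab := abs_le.mp hxy
    have hy1 : x/2 ≤ y := by linarith [hab.2]
    have hy2 : y ≤ 3*x/2 := by linarith [hab.1]
    have hs := hsy_pos y hy
    have hkey : (1+y) ^ ((1:ℝ)/3) * (T-t) ≤ 4*x*y := by
      rcases le_total y 1 with hc | hc
      · have h8 : (1+y) ^ ((1:ℝ)/3) ≤ 2 := by
          calc (1+y) ^ ((1:ℝ)/3) ≤ (8:ℝ) ^ ((1:ℝ)/3) :=
                Real.rpow_le_rpow (by linarith) (by linarith) (by norm_num)
            _ = 2 := eight_rpow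
        have hr0 : 0 < (1+y) ^ ((1:ℝ)/3) := Real.rpow_pos_of_pos (by linarith) _
        nlinarith
      · have h8 : (1+y) ^ ((1:ℝ)/3) ≤ 1 + y := by
          calc (1+y) ^ ((1:ℝ)/3) ≤ (1+y) ^ (1:ℝ) :=
                Real.rpow_le_rpow_of_exponent_le (by linarith) (by norm_num)
            _ = 1 + y := Real.rpow_one _
        have hr0 : 0 < (1+y) ^ ((1:ℝ)/3) := Real.rpow_pos_of_pos (by linarith) _
        nlinarith
    have hk := key1 hs hkey
    unfold imgK
    linarith
  -- continuity & integrability of the Gaussian term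
  have hGcont : ContinuousOn (fun y => heatG (x - y) ((1+y) ^ ((1:ℝ)/3) * (T-t)))
      (Icc (x/2) (3*x/2)) := by
    apply heatG_contOn (continuous_const.sub continuous_id).continuousOn
      (rpow_cont.mul continuous_const).continuousOn
    intro y hy
    exact hsy_pos y (by have := hy.1; linarith)
  have hGint : IntegrableOn (fun y => heatG (x - y) ((1+y) ^ ((1:ℝ)/3) * (T-t)))
      (Ioo (x/2) (3*x/2)) := hGcont.integrableOn_Icc.mono_set Ioo_subset_Icc_self
  -- Part (ii)
  set s₀ : ℝ := (1+x) ^ ((1:ℝ)/3) * (T-t) with hs₀def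
  have hs₀pos : 0 < s₀ := mul_pos (Real.rpow_pos_of_pos (by linarith) _) h1
  have hs₀le : s₀ ≤ 2*x^2 := by
    rcases le_total x 1 with hc | hc
    · have h8 : (1+x) ^ ((1:ℝ)/3) ≤ 2 := by
        calc (1+x) ^ ((1:ℝ)/3) ≤ (8:ℝ) ^ ((1:ℝ)/3) :=
              Real.rpow_le_rpow (by linarith) (by linarith) (by norm_num)
          _ = 2 := eight_rpow
      rw [hs₀def]; nlinarith
    · have h8 : (1+x) ^ ((1:ℝ)/3) ≤ 1 + x := by
        calc (1+x) ^ ((1:ℝ)/3) ≤ (1+x) ^ (1:ℝ) :=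
              Real.rpow_le_rpow_of_exponent_le (by linarith) (by norm_num)
          _ = 1 + x := Real.rpow_one _
      have hr0 : 0 < (1+x) ^ ((1:ℝ)/3) := Real.rpow_pos_of_pos (by linarith) _
      rw [hs₀def]; nlinarith
  set w : ℝ := Real.sqrt s₀ / 3 with hwdef
  have hwpos : 0 < w := by
    rw [hwdef]; positivity
  have hw2 : w^2 = s₀/9 := by
    rw [hwdef, div_pow, Real.sq_sqrt hs₀pos.le]; norm_num
  have hwx : w ≤ x/2 := by
    have h32 : Real.sqrt s₀ ≤ 3/2*x := by
      calc Real.sqrt s₀ ≤ Real.sqrt ((3/2*x)^2) := Real.sqrt_le_sqrt (by nlinarith)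
        _ = 3/2*x := Real.sqrt_sq (by linarith)
    rw [hwdef]; linarith
  have hsub : Ioo (x - w) (x + w) ⊆ Ioo (x/2) (3*x/2) := by
    intro y hy
    exact ⟨by linarith [hy.1], by linarith [hy.2]⟩
  have hpt : ∀ y ∈ Ioo (x - w) (x + w),
      (Real.sqrt (8 * Real.pi * s₀))⁻¹ * Real.exp (-(s₀/9)/(2*s₀))
        ≤ heatG (x - y) ((1+y) ^ ((1:ℝ)/3) * (T-t)) := by
    intro y hy
    obtain ⟨hy1, hy2⟩ := hy
    have hyx2 : x/2 < y := by linarith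
    have hyx3 : y < 3*x/2 := by linarith
    have h13x : 0 < (1+x) ^ ((1:ℝ)/3) := Real.rpow_pos_of_pos (by linarith) _
    have h13y : 0 < (1+y) ^ ((1:ℝ)/3) := Real.rpow_pos_of_pos (by linarith) _
    apply heatG_lb hs₀pos
    · have hcm : (1+x) ^ ((1:ℝ)/3) ≤ 2 * (1+y) ^ ((1:ℝ)/3) := by
        calc (1+x) ^ ((1:ℝ)/3) ≤ (8*(1+y)) ^ ((1:ℝ)/3) :=
              Real.rpow_le_rpow (by linarith) (by linarith) (by norm_num)
          _ = 8 ^ ((1:ℝ)/3) * (1+y) ^ ((1:ℝ)/3) := Real.mul_rpow (by norm_num) (by linarith)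
          _ = 2 * (1+y) ^ ((1:ℝ)/3) := by rw [eight_rpow]
      rw [hs₀def]; nlinarith
    · have hcm : (1+y) ^ ((1:ℝ)/3) ≤ 2 * (1+x) ^ ((1:ℝ)/3) := by
        calc (1+y) ^ ((1:ℝ)/3) ≤ (8*(1+x)) ^ ((1:ℝ)/3) :=
              Real.rpow_le_rpow (by linarith) (by linarith) (by norm_num)
          _ = 8 ^ ((1:ℝ)/3) * (1+x) ^ ((1:ℝ)/3) := Real.mul_rpow (by norm_num) (by linarith)
          _ = 2 * (1+x) ^ ((1:ℝ)/3) := by rw [eight_rpow]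
      rw [hs₀def]; nlinarith
    · have : (x - y)^2 ≤ w^2 := sq_le_sq' (by linarith) (by linarith)
      rw [hw2] at this; exact this
  have hGint2 : IntegrableOn (fun y => heatG (x - y) ((1+y) ^ ((1:ℝ)/3) * (T-t)))
      (Ioo (x - w) (x + w)) := hGint.mono_set hsub
  have hC18 : (-(s₀/9)/(2*s₀)) = -(1/18 : ℝ) := by
    field_simp
    ring
  have hCval : (1/10:ℝ) ≤ (Real.sqrt (8 * Real.pi * s₀))⁻¹ *
      Real.exp (-(s₀/9)/(2*s₀)) * (2*w) := by
    rw [hC18, hwdef]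
    have hsqrt_mul : Real.sqrt (8 * Real.pi * s₀)
        = Real.sqrt (8 * Real.pi) * Real.sqrt s₀ := Real.sqrt_mul (by positivity) _
    rw [hsqrt_mul, mul_inv]
    have hA : (0:ℝ) < Real.sqrt (8 * Real.pi) := Real.sqrt_pos.mpr (by positivity)
    have hA6 : Real.sqrt (8 * Real.pi) ≤ 6 := by
      calc Real.sqrt (8 * Real.pi) ≤ Real.sqrt 36 := by
            apply Real.sqrt_le_sqrt; nlinarith [Real.pi_le_four]
        _ = 6 := by rw [show (36:ℝ) = 6^2 by norm_num, Real.sqrt_sq (by norm_num)]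
    have hAinv : (1/6:ℝ) ≤ (Real.sqrt (8 * Real.pi))⁻¹ := by
      have h := one_div_le_one_div_of_le hA hA6
      simpa using h
    have hE : (17/18:ℝ) ≤ Real.exp (-(1/18:ℝ)) := by
      have := Real.add_one_le_exp (-(1/18):ℝ); linarith
    have hsS : (0:ℝ) < Real.sqrt s₀ := Real.sqrt_pos.mpr hs₀pos
    have hcancel : (Real.sqrt s₀)⁻¹ * (2 * (Real.sqrt s₀ / 3)) = 2/3 := by
      field_simp
    have hEpos := Real.exp_pos (-(1/18:ℝ))
    calc (1/10:ℝ) ≤ (1/6) * (17/18) * (2/3) := by norm_num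
      _ ≤ (Real.sqrt (8 * Real.pi))⁻¹ * Real.exp (-(1/18:ℝ)) * (2/3) := by
          apply mul_le_mul_of_nonneg_right _ (by norm_num)
          apply mul_le_mul hAinv hE (by norm_num) (by positivity)
      _ = (Real.sqrt (8 * Real.pi))⁻¹ * ((Real.sqrt s₀)⁻¹ *
            (2 * (Real.sqrt s₀ / 3))) * Real.exp (-(1/18:ℝ)) := by
          rw [hcancel]; ring
      _ = (Real.sqrt (8 * Real.pi))⁻¹ * (Real.sqrt s₀)⁻¹ * Real.exp (-(1/18:ℝ)) *
            (2 * (Real.sqrt s₀ / 3)) := by ring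
  have hvol : (volume (Ioo (x - w) (x + w))).toReal = 2*w := by
    rw [Real.volume_Ioo, ENNReal.toReal_ofReal (by linarith)]
    ring
  have hlow : (Real.sqrt (8 * Real.pi * s₀))⁻¹ * Real.exp (-(s₀/9)/(2*s₀)) * (2*w)
      ≤ ∫ y in Ioo (x - w) (x + w), heatG (x - y) ((1+y) ^ ((1:ℝ)/3) * (T-t)) := by
    rw [← hvol]
    exact setIntegral_ge_of_const_le_real measurableSet_Ioo
      (by rw [Real.volume_Ioo]; exact ENNReal.ofReal_ne_top) hpt hGint2
  have hmono : (∫ y in Ioo (x - w) (x + w), heatG (x - y) ((1+y) ^ ((1:ℝ)/3) * (T-t)))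
      ≤ ∫ y in Ioo (x/2) (3*x/2), heatG (x - y) ((1+y) ^ ((1:ℝ)/3) * (T-t)) := by
    apply setIntegral_mono_set hGint
    · filter_upwards [ae_restrict_mem measurableSet_Ioo] with y hy
      exact (heatG_pos (hsy_pos y (by have := hy.1; linarith))).le
    · exact HasSubset.Subset.eventuallyLE hsub
  have part2 : (1/10:ℝ) ≤ ∫ y in Ioo (x/2) (3*x/2),
      heatG (x - y) ((1+y) ^ ((1:ℝ)/3) * (T-t)) := le_trans hCval (le_trans hlow hmono)
  refine ⟨part1, part2, ?_⟩
  -- Part (iii)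
  have himgK_nonneg : ∀ y : ℝ, 0 ≤ y → 0 ≤ imgK T x y t := by
    intro y hy
    have hs := hsy_pos y hy
    have hm := heatG_mono_x hs (show (x-y)^2 ≤ (x+y)^2 by nlinarith)
    unfold imgK; linarith
  set M : ℝ := 2*x + 1 with hMdef
  have hM1 : (1:ℝ) ≤ M := by rw [hMdef]; linarith
  have hintIoc : IntegrableOn (fun y => imgK T x y t) (Ioc 0 M) := by
    have hc : ContinuousOn (fun y => imgK T x y t) (Icc 0 M) :=
      imgK_contOn h1 (fun y hy => hy.1)
    exact hc.integrableOn_Icc.mono_set Ioc_subset_Icc_self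
  have htail : IntegrableOn (fun y => imgK T x y t) (Ioi M) := by
    have hmaj : IntegrableOn
        (fun y => 2 * (Real.sqrt (4*Real.pi*(T-t)))⁻¹ * Real.exp (-(1/32)*y)) (Ioi M) :=
      (exp_neg_integrableOn_Ioi M (by norm_num : (0:ℝ) < 1/32)).const_mul _
    apply Integrable.mono' hmaj
    · exact (imgK_contOn h1 (fun y hy => by
        have : M < y := hy; linarith)).aestronglyMeasurable measurableSet_Ioi
    · rw [ae_restrict_iff' measurableSet_Ioi]
      apply Filter.Eventually.of_forall
      intro y hy
      have hyM : M < y := hy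
      have hy1 : 1 < y := lt_of_le_of_lt hM1 hyM
      have hy2x : 2*x < y := by rw [hMdef] at hyM; linarith
      have hypos : 0 < y := by linarith
      set s : ℝ := (1+y) ^ ((1:ℝ)/3) * (T-t) with hsdef
      have hs : 0 < s := hsy_pos y hypos.le
      have hr1 : 1 ≤ (1+y) ^ ((1:ℝ)/3) := Real.one_le_rpow (by linarith) (by norm_num)
      have hrle : (1+y) ^ ((1:ℝ)/3) ≤ 1 + y := by
        calc (1+y) ^ ((1:ℝ)/3) ≤ (1+y) ^ (1:ℝ) :=
              Real.rpow_le_rpow_of_exponent_le (by linarith) (by norm_num)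
          _ = 1 + y := Real.rpow_one _
      have hsup : 4*s ≤ 8*y := by
        rw [hsdef]; nlinarith
      have hslow : T - t ≤ s := by rw [hsdef]; nlinarith
      have hpre : (Real.sqrt (4*Real.pi*s))⁻¹ ≤ (Real.sqrt (4*Real.pi*(T-t)))⁻¹ := by
        apply inv_anti₀ (Real.sqrt_pos.mpr (by positivity))
        apply Real.sqrt_le_sqrt; nlinarith
      have hbound : ∀ z : ℝ, y^2/4 ≤ z^2 →
          heatG z s ≤ (Real.sqrt (4*Real.pi*(T-t)))⁻¹ * Real.exp (-(1/32)*y) := by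
        intro z hz
        unfold heatG
        apply mul_le_mul hpre _ (Real.exp_pos _).le (by positivity)
        apply Real.exp_le_exp.mpr
        rw [div_le_iff₀ (by positivity : (0:ℝ) < 4*s)] at *
        nlinarith
      have hA := hbound (x - y) (by nlinarith)
      have hB := hbound (x + y) (by nlinarith)
      have hApos : 0 < heatG (x - y) s := heatG_pos hs
      have hBpos : 0 < heatG (x + y) s := heatG_pos hs
      rw [Real.norm_eq_abs]
      have : |imgK T x y t| ≤ heatG (x - y) s + heatG (x + y) s := by
        unfold imgK
        rw [← hsdef, abs_le]
        constructor <;> linarith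
      calc |imgK T x y t| ≤ heatG (x - y) s + heatG (x + y) s := this
        _ ≤ 2 * (Real.sqrt (4*Real.pi*(T-t)))⁻¹ * Real.exp (-(1/32)*y) := by linarith
  have himgK_int : IntegrableOn (fun y => imgK T x y t) (Ioi 0) := by
    rw [← Ioc_union_Ioi_eq_Ioi (by linarith : (0:ℝ) ≤ M)]
    exact hintIoc.union htail
  have hsub0 : Ioo (x/2) (3*x/2) ⊆ Ioi (0:ℝ) := fun y hy => by
    have := hy.1; exact mem_Ioi.mpr (by linarith)
  have step1 : (∫ y in Ioo (x/2) (3*x/2), imgK T x y t) ≤ ∫ y in Ioi (0:ℝ), imgK T x y t := by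
    apply setIntegral_mono_set himgK_int
    · filter_upwards [ae_restrict_mem measurableSet_Ioi] with y hy
      exact himgK_nonneg y (le_of_lt hy)
    · exact HasSubset.Subset.eventuallyLE hsub0
  have step2 : (1/5:ℝ) * ∫ y in Ioo (x/2) (3*x/2), heatG (x - y) ((1+y) ^ ((1:ℝ)/3) * (T-t))
      ≤ ∫ y in Ioo (x/2) (3*x/2), imgK T x y t := by
    rw [← MeasureTheory.integral_const_mul]
    apply setIntegral_mono_on (hGint.const_mul _) (himgK_int.mono_set hsub0) measurableSet_Ioo
    intro y hy
    have hy0 : 0 ≤ y := by have := hy.1; linarith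
    have habs : |x - y| ≤ x/2 := by
      rw [abs_le]; exact ⟨by linarith [hy.2], by linarith [hy.1]⟩
    exact part1 y hy0 habs
  calc (1/5:ℝ) * (1/10) ≤ (1/5:ℝ) * ∫ y in Ioo (x/2) (3*x/2),
        heatG (x - y) ((1+y) ^ ((1:ℝ)/3) * (T-t)) :=
        mul_le_mul_of_nonneg_left part2 (by norm_num)
    _ ≤ ∫ y in Ioo (x/2) (3*x/2), imgK T x y t := step2
    _ ≤ ∫ y in Ioi (0:ℝ), imgK T x y t := step1
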